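/- Let A be symmetric with all leading principal submatrices invertible and suppose the spectra of all leading principal submatrices of a Hermitian matrix H are contained in a compact set 𝓔 ⊂ ℝ, and let z ∉ 𝓔, A = H − zI with LDLᵀ factorization A = L D Lᵀ. Then for each j, the diagonal entry satisfies |D(j,j)| ≥ dist(z, 𝓔), where dist(z, 𝓔) = min_{x ∈ 𝓔} |z − x|. Equivalently, D(j,j)^{-1} = (A({1,...,j},{1,...,j}))^{-1}(j,j) and the spectrum of A({1,...,j},{1,...,j}) lies in 𝓔 − z. -/

import Mathlib

open Matrix

private lemma triple_entry' {m : ℕ} (M : Matrix (Fin m) (Fin m) ℂ) (v : Fin m → ℂ)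
    (N : Matrix (Fin m) (Fin m) ℂ) (a b : Fin m) :
    (M * diagonal v * Nᵀ) a b = ∑ c, M a c * v c * N b c := by
  rw [Matrix.mul_apply]
  simp [Matrix.mul_diagonal, transpose_apply]

private lemma diag_inv' {m : ℕ} (v : Fin m → ℂ) (hv : ∀ c, v c ≠ 0) :
    (diagonal v)⁻¹ = diagonal (fun c => (v c)⁻¹) := by
  apply inv_eq_right_inv
  rw [diagonal_mul_diagonal]
  simp [mul_inv_cancel₀, hv]

/-- Resolvent entry bound for a Hermitian matrix with spectrum inside `E`. -/
private lemma resolvent_entry_bound {m : ℕ} (M : Matrix (Fin m) (Fin m) ℂ)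
    (hM : M.IsHermitian) (E : Set ℂ) (hsp : spectrum ℂ M ⊆ E) (z : ℂ) (hz : z ∉ E)
    (i : Fin m) :
    IsUnit (M - z • (1 : Matrix (Fin m) (Fin m) ℂ)) ∧
      Metric.infDist z E *
        ‖(M - z • (1 : Matrix (Fin m) (Fin m) ℂ))⁻¹ i i‖ ≤ 1 := by
  classical
  set U : Matrix (Fin m) (Fin m) ℂ := (hM.eigenvectorUnitary : Matrix (Fin m) (Fin m) ℂ)
    with hUdef
  set lam : Fin m → ℝ := hM.eigenvalues with hlamdef
  set d : ℝ := Metric.infDist z E with hddef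
  have hlamE : ∀ p, ((lam p : ℂ)) ∈ E := by
    intro p
    have h1 : lam p ∈ spectrum ℝ M := hM.eigenvalues_mem_spectrum_real p
    have h2 := spectrum.algebraMap_mem ℂ h1
    simpa using hsp h2
  have hne : ∀ p, ((lam p : ℂ)) - z ≠ 0 := by
    intro p h
    apply hz
    rw [sub_eq_zero] at h
    exact h ▸ hlamE p
  have habs_ne : ∀ p, ‖(lam p : ℂ) - z‖ ≠ 0 :=
    fun p => norm_ne_zero_iff.mpr (hne p)
  have hdle : ∀ p, d ≤ ‖(lam p : ℂ) - z‖ := by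
    intro p
    have h1 : Metric.infDist z E ≤ dist z ((lam p : ℂ)) :=
      Metric.infDist_le_dist_of_mem (hlamE p)
    rwa [Complex.dist_eq, norm_sub_rev] at h1
  have hdmu : ∀ p, d * ‖((lam p : ℂ) - z)⁻¹‖ ≤ 1 := by
    intro p
    rw [norm_inv]
    calc d * (‖(lam p : ℂ) - z‖)⁻¹
        ≤ ‖(lam p : ℂ) - z‖ * (‖(lam p : ℂ) - z‖)⁻¹ :=
          mul_le_mul_of_nonneg_right (hdle p) (inv_nonneg.mpr (norm_nonneg _))
      _ = 1 := mul_inv_cancel₀ (habs_ne p)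
  have hU1 : U * star U = 1 := mem_unitaryGroup_iff.mp hM.eigenvectorUnitary.2
  have hU1' : star U * U = 1 := mem_unitaryGroup_iff'.mp hM.eigenvectorUnitary.2
  have hres : M - z • (1 : Matrix (Fin m) (Fin m) ℂ)
      = U * diagonal (fun p => (lam p : ℂ) - z) * star U := by
    have h0 : diagonal (fun p => (lam p : ℂ) - z)
        = diagonal ((RCLike.ofReal ∘ lam : Fin m → ℂ)) - z • 1 := by
      rw [Matrix.smul_one_eq_diagonal, diagonal_sub]
      rfl
    rw [h0, mul_sub, sub_mul]
    congr 1
    · exact hM.spectral_theorem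
    · rw [Matrix.mul_smul, Matrix.mul_one, Matrix.smul_mul, hU1]
  have hinv : (M - z • (1 : Matrix (Fin m) (Fin m) ℂ))⁻¹
      = U * diagonal (fun p => ((lam p : ℂ) - z)⁻¹) * star U := by
    apply inv_eq_right_inv
    rw [hres]
    simp only [Matrix.mul_assoc]
    rw [← Matrix.mul_assoc (star U) U, hU1', Matrix.one_mul,
      ← Matrix.mul_assoc (diagonal _) (diagonal _), diagonal_mul_diagonal]
    have : (fun p => ((lam p : ℂ) - z) * ((lam p : ℂ) - z)⁻¹) = fun _ => (1 : ℂ) := by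
      funext p; exact mul_inv_cancel₀ (hne p)
    rw [this, diagonal_one, Matrix.one_mul, hU1]
  constructor
  · have h1 : IsUnit ((algebraMap ℂ (Matrix (Fin m) (Fin m) ℂ)) z - M) :=
      spectrum.notMem_iff.mp (fun h => hz (hsp h))
    rw [Algebra.algebraMap_eq_smul_one] at h1
    simpa [neg_sub] using h1.neg
  · -- entry formula
    have hent : (M - z • (1 : Matrix (Fin m) (Fin m) ℂ))⁻¹ i i
        = ∑ p, ((lam p : ℂ) - z)⁻¹ * (Complex.normSq (U i p) : ℂ) := by
      rw [hinv, Matrix.mul_apply]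
      apply Finset.sum_congr rfl
      intro p _
      rw [Matrix.mul_diagonal, Matrix.star_apply, RCLike.star_def,
        mul_comm (U i p), mul_assoc, Complex.mul_conj]
    have hrow : ∑ p, Complex.normSq (U i p) = 1 := by
      have h1 := congrFun (congrFun hU1 i) i
      rw [Matrix.mul_apply, Matrix.one_apply_eq] at h1
      have h2 : ((∑ p, Complex.normSq (U i p) : ℝ) : ℂ) = 1 := by
        push_cast
        rw [← h1]
        apply Finset.sum_congr rfl
        intro p _
        rw [Matrix.star_apply, RCLike.star_def]
        exact (Complex.mul_conj (U i p)).symm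
      exact_mod_cast h2
    rw [hent]
    calc d * ‖∑ p, ((lam p : ℂ) - z)⁻¹ * (Complex.normSq (U i p) : ℂ)‖
        ≤ d * ∑ p, ‖((lam p : ℂ) - z)⁻¹ * (Complex.normSq (U i p) : ℂ)‖ := by
          apply mul_le_mul_of_nonneg_left (norm_sum_le _ _) Metric.infDist_nonneg
      _ = ∑ p, (d * ‖((lam p : ℂ) - z)⁻¹‖) * Complex.normSq (U i p) := by
          rw [Finset.mul_sum]
          apply Finset.sum_congr rfl
          intro p _
          rw [norm_mul, Complex.norm_real, Real.norm_of_nonneg (Complex.normSq_nonneg _)]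
          ring
      _ ≤ ∑ p, 1 * Complex.normSq (U i p) :=
          Finset.sum_le_sum fun p _ =>
            mul_le_mul_of_nonneg_right (hdmu p) (Complex.normSq_nonneg _)
      _ = 1 := by simp [hrow]

/-- The (last,last) entry of the inverse of `L * diagonal v * Lᵀ` is `(v last)⁻¹`. -/
private lemma pivot_entry {m : ℕ} (Aj Lj : Matrix (Fin (m+1)) (Fin (m+1)) ℂ)
    (v : Fin (m+1) → ℂ)
    (hL_lower : ∀ a b : Fin (m+1), a < b → Lj a b = 0) (hL_diag : ∀ a, Lj a a = 1)
    (hfact : Aj = Lj * diagonal v * Ljᵀ) (hunit : IsUnit Aj) :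
    v (Fin.last m) ≠ 0 ∧ Aj⁻¹ (Fin.last m) (Fin.last m) = (v (Fin.last m))⁻¹ := by
  classical
  have hLt : Lj.BlockTriangular OrderDual.toDual := fun a b h => hL_lower a b h
  have hdetL : Lj.det = 1 := by
    rw [Matrix.det_of_lowerTriangular Lj hLt]
    simp [hL_diag]
  have hLunit : IsUnit Lj.det := by rw [hdetL]; exact isUnit_one
  have hdetA : Aj.det = ∏ c, v c := by
    rw [hfact, det_mul, det_mul, hdetL, det_diagonal, det_transpose, hdetL]
    ring
  have hvne : ∀ c, v c ≠ 0 := by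
    have h1 : IsUnit Aj.det := (Matrix.isUnit_iff_isUnit_det _).mp hunit
    rw [hdetA, isUnit_iff_ne_zero] at h1
    intro c
    exact Finset.prod_ne_zero_iff.mp h1 c (Finset.mem_univ c)
  have hmul : Lj *ᵥ Pi.single (Fin.last m) (1:ℂ) = Pi.single (Fin.last m) (1:ℂ) := by
    rw [Matrix.mulVec_single]
    funext q
    by_cases h : q = Fin.last m
    · subst h; simp [hL_diag]
    · have hlt : q < Fin.last m := lt_of_le_of_ne (Fin.le_last q) h
      simp [hL_lower _ _ hlt, Pi.single_apply, h]
  have hcol : ∀ p, Lj⁻¹ p (Fin.last m) = (Pi.single (Fin.last m) (1:ℂ) : Fin (m+1) → ℂ) p := by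
    have h2 : Lj⁻¹ *ᵥ Pi.single (Fin.last m) (1:ℂ) = Pi.single (Fin.last m) (1:ℂ) := by
      conv_lhs => rw [← hmul]
      rw [Matrix.mulVec_mulVec, Matrix.nonsing_inv_mul Lj hLunit, Matrix.one_mulVec]
    intro p
    have h3 := congrFun h2 p
    rw [Matrix.mulVec_single] at h3
    simpa using h3
  refine ⟨hvne _, ?_⟩
  have hinv : Aj⁻¹ = Ljᵀ⁻¹ * ((diagonal v)⁻¹ * Lj⁻¹) := by
    rw [hfact, Matrix.mul_inv_rev, Matrix.mul_inv_rev]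
  rw [hinv, diag_inv' v hvne, ← Matrix.transpose_nonsing_inv, Matrix.mul_apply]
  have hterm : ∀ p, (Lj⁻¹)ᵀ (Fin.last m) p *
      (diagonal (fun c => (v c)⁻¹) * Lj⁻¹) p (Fin.last m)
      = (Pi.single (Fin.last m) (1:ℂ) : Fin (m+1) → ℂ) p *
          ((v p)⁻¹ * (Pi.single (Fin.last m) (1:ℂ) : Fin (m+1) → ℂ) p) := by
    intro p
    rw [transpose_apply, Matrix.diagonal_mul, hcol p]
  rw [Finset.sum_congr rfl (fun p _ => hterm p)]
  simp [Pi.single_apply]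

theorem ldlt_pivot_lower_bound {n : ℕ} (H : Matrix (Fin n) (Fin n) ℂ)
    (hH : H.IsHermitian) (𝓔 : Set ℝ) (hcompact : IsCompact 𝓔)
    (hspec : ∀ i : Fin n,
      spectrum ℂ (H.submatrix (Fin.castLE i.isLt) (Fin.castLE i.isLt)) ⊆
        Complex.ofReal '' 𝓔)
    (z : ℂ) (hz : z ∉ Complex.ofReal '' 𝓔)
    (A L D : Matrix (Fin n) (Fin n) ℂ)
    (hA : A = H - z • (1 : Matrix (Fin n) (Fin n) ℂ))
    (hL_lower : ∀ i j : Fin n, i < j → L i j = 0)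
    (hL_diag : ∀ i : Fin n, L i i = 1)
    (hD_diag : ∀ i j : Fin n, i ≠ j → D i j = 0)
    (hfact : A = L * D * Lᵀ) :
    ∀ j : Fin n, Metric.infDist z (Complex.ofReal '' 𝓔) ≤ ‖D j j‖ := by
  intro j
  classical
  set e : Fin ((j : ℕ) + 1) → Fin n := Fin.castLE j.isLt with hedef
  have he_inj : Function.Injective e := Fin.castLE_injective _
  have hHj : (H.submatrix e e).IsHermitian := hH.submatrix _
  have hAj : A.submatrix e e = H.submatrix e e - z • 1 := by
    ext a b
    by_cases h : a = b
    · subst h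
      simp [hA, Matrix.sub_apply, Matrix.one_apply]
    · have h' : e a ≠ e b := fun hh => h (he_inj hh)
      simp [hA, Matrix.sub_apply, Matrix.one_apply, h, h']
  obtain ⟨hunit, hbound⟩ :=
    resolvent_entry_bound (H.submatrix e e) hHj (Complex.ofReal '' 𝓔) (hspec j) z hz
      (Fin.last (j : ℕ))
  rw [← hAj] at hunit hbound
  -- restrict the factorization to the leading block
  have hfactj : A.submatrix e e
      = (L.submatrix e e) * diagonal (fun c => D (e c) (e c)) * (L.submatrix e e)ᵀ := by
    ext a b
    have hDdg : D = diagonal (fun p => D p p) := by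
      ext p q
      by_cases h : p = q
      · subst h; simp
      · simp [Matrix.diagonal_apply_ne _ h, hD_diag p q h]
    have h1 : A.submatrix e e a b = ∑ p : Fin n, L (e a) p * D p p * L (e b) p := by
      rw [Matrix.submatrix_apply, hfact, hDdg]
      simp only [triple_entry', Matrix.diagonal_apply_eq]
    rw [h1]
    simp only [triple_entry', Matrix.diagonal_apply_eq, Matrix.submatrix_apply]
    symm
    have hmap := Finset.sum_map Finset.univ ⟨e, he_inj⟩
      (fun p => L (e a) p * D p p * L (e b) p)
    simp only [Function.Embedding.coeFn_mk] at hmap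
    rw [← hmap]
    apply Finset.sum_subset (Finset.subset_univ _)
    intro p _ hp
    have hgt : (j : ℕ) < (p : ℕ) := by
      by_contra hle
      push_neg at hle
      exact hp (Finset.mem_map.mpr ⟨⟨(p : ℕ), Nat.lt_succ_of_le hle⟩, Finset.mem_univ _,
        by simp [hedef, Fin.ext_iff]⟩)
    have hlt : e b < p := by
      rw [Fin.lt_def]
      calc ((e b : Fin n) : ℕ) = (b : ℕ) := by simp [hedef]
        _ ≤ (j : ℕ) := Nat.lt_succ_iff.mp b.isLt
        _ < (p : ℕ) := hgt
    rw [hL_lower _ _ hlt]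
    ring
  have hLj_lower : ∀ a b : Fin ((j : ℕ) + 1), a < b → L.submatrix e e a b = 0 := by
    intro a b h
    apply hL_lower
    exact Fin.strictMono_castLE _ h
  have hLj_diag : ∀ a : Fin ((j : ℕ) + 1), L.submatrix e e a a = 1 := fun a => hL_diag _
  obtain ⟨hvne, hentry⟩ := pivot_entry (A.submatrix e e) (L.submatrix e e)
    (fun c => D (e c) (e c)) hLj_lower hLj_diag hfactj hunit
  have helast : e (Fin.last (j : ℕ)) = j := by
    simp [hedef, Fin.ext_iff]
  rw [helast] at hvne hentry
  rw [hentry, norm_inv] at hbound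
  have hpos : 0 < ‖D j j‖ := norm_pos_iff.mpr hvne
  rw [← div_eq_mul_inv, div_le_one hpos] at hbound
  exact hbound
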